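/- Main theorem: Let f : I → I be a continuous surjection on a real interval I satisfying aₙ fⁿ(x) + ... + a₁ f(x) + a₀ x = 0 for all x ∈ I, where the characteristic polynomial aₙ rⁿ + ... + a₀ has real roots r₁ and r₂ (of multiplicities k₁, k₂) with r₁ < -1 < r₂ < 0, and all other roots λ₁,...,λ_p satisfy |r₂| < |λ_i| < |r₁|. Then f satisfies the lower-order equation whose characteristic polynomial has roots exactly {r_i (multiplicity k_i), λ₁ (mult. l₁), ..., λ_p (mult. l_p)} for i = 1 or for i = 2 (i.e., one of the two negative roots can be eliminated, uniformly in x). -/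

import Mathlib

open Polynomial

namespace Stmt12Aux

variable {R : Type*} [CommRing R]

/-- shift endomorphism on two-sided sequences -/
def shift (R : Type*) [CommRing R] : Module.End R (ℤ → R) where
  toFun u := fun m => u (m + 1)
  map_add' := by intros; rfl
  map_smul' := by intros; rfl

noncomputable def L (p : R[X]) (u : ℤ → R) : ℤ → R := Polynomial.aeval (shift R) p u

lemma L_mul (p q : R[X]) (u : ℤ → R) : L (p * q) u = L p (L q u) := by
  unfold L; rw [map_mul]; rfl

lemma L_add (p q : R[X]) (u : ℤ → R) : L (p + q) u = L p u + L q u := by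
  unfold L; rw [map_add]; rfl

lemma L_one (u : ℤ → R) : L 1 u = u := by
  unfold L; rw [map_one]; rfl

lemma L_zero (u : ℤ → R) : L 0 u = 0 := by
  unfold L; rw [map_zero]; rfl

lemma L_seq_add (p : R[X]) (u v : ℤ → R) : L p (u + v) = L p u + L p v :=
  (aeval (shift R) p).map_add u v

lemma L_seq_zero (p : R[X]) : L p (0 : ℤ → R) = 0 :=
  (aeval (shift R) p).map_zero

lemma shift_pow (k : ℕ) (u : ℤ → R) (m : ℤ) : ((shift R ^ k) u) m = u (m + k) := by
  induction k generalizing u m with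
  | zero => simp [shift]
  | succ k ih =>
    have : (shift R ^ (k+1)) u = (shift R ^ k) (shift R u) := by
      rw [pow_succ]; rfl
    rw [this, ih]
    show u (m + k + 1) = _
    congr 1; push_cast; ring

lemma L_apply (p : R[X]) (u : ℤ → R) (m : ℤ) :
    L p u m = p.sum fun k c => c * u (m + k) := by
  induction p using Polynomial.induction_on' with
  | add p q hp hq =>
    rw [L_add]
    show L p u m + L q u m = _
    rw [hp, hq, Polynomial.sum_add_index] <;> intros <;> simp [add_mul]
  | monomial k c =>
    rw [Polynomial.sum_monomial_index]
    · unfold L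
      rw [Polynomial.aeval_monomial]
      show (c • ((shift R) ^ k) u) m = c * u (m + k)
      · simp [shift_pow]
    · simp

lemma L_apply_range (p : R[X]) {N : ℕ} (hN : p.natDegree < N) (u : ℤ → R) (m : ℤ) :
    L p u m = ∑ k ∈ Finset.range N, p.coeff k * u (m + k) := by
  rw [L_apply, Polynomial.sum_over_range' _ (by intros; simp) N hN]

lemma L_map (p : ℝ[X]) (u : ℤ → ℝ) (m : ℤ) :
    L (p.map (algebraMap ℝ ℂ)) (fun j => (u j : ℂ)) m = ((L p u m : ℝ) : ℂ) := by
  rw [L_apply_range (p.map (algebraMap ℝ ℂ))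
      (lt_of_le_of_lt (natDegree_map_le (f := algebraMap ℝ ℂ) (p := p))
        (Nat.lt_succ_of_le (le_refl _))) _ m,
    L_apply_range p (lt_add_one _) u m]
  push_cast
  simp [Polynomial.coeff_map]


lemma L_sub (p q : R[X]) (u : ℤ → R) : L (p - q) u = L p u - L q u := by
  unfold L; rw [map_sub]; rfl

lemma L_X (u : ℤ → R) (m : ℤ) : L X u m = u (m + 1) := by
  unfold L; rw [Polynomial.aeval_X]; rfl

lemma L_C (c : R) (u : ℤ → R) (m : ℤ) : L (C c) u m = c * u m := by
  unfold L; rw [Polynomial.aeval_C]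
  show (c • (1 : Module.End R (ℤ → R))) u m = c * u m
  simp

lemma L_X_sub_C (r : R) (u : ℤ → R) (m : ℤ) :
    L (X - C r) u m = u (m + 1) - r * u m := by
  rw [L_sub]
  show L X u m - L (C r) u m = _
  rw [L_X, L_C]

/-- Bezout splitting of the kernel. -/
lemma bezout_split (A B : ℝ[X]) (h : IsCoprime A B) (u : ℤ → ℝ) (hu : L (A * B) u = 0) :
    ∃ v w, u = v + w ∧ L A v = 0 ∧ L B w = 0 := by
  obtain ⟨s, t, hst⟩ := h
  refine ⟨L (t * B) u, L (s * A) u, ?_, ?_, ?_⟩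
  · rw [← L_add]
    have h1 : t * B + s * A = 1 := by linear_combination hst
    rw [h1, L_one]
  · rw [← L_mul, show A * (t * B) = t * (A * B) by ring, L_mul, hu, L_seq_zero]
  · rw [← L_mul, show B * (s * A) = s * (A * B) by ring, L_mul, hu, L_seq_zero]

lemma coprime_X_sub_C_of_eval_ne (a : ℝ) (q : ℝ[X]) (h : q.eval a ≠ 0) :
    IsCoprime (X - C a) q := by
  obtain ⟨g, hg⟩ := Polynomial.X_sub_C_dvd_sub_C_eval (a := a) (p := q)
  refine ⟨-(C (q.eval a)⁻¹) * g, C (q.eval a)⁻¹, ?_⟩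
  have : C (q.eval a)⁻¹ * (q - (X - C a) * g) = 1 := by
    rw [← hg]
    rw [show q - (q - C (q.eval a)) = C (q.eval a) by ring, ← Polynomial.C_mul,
      inv_mul_cancel₀ h, Polynomial.C_1]
  linear_combination this

lemma coprime_X_sub_C_X_sub_C {a b : ℝ} (h : a ≠ b) :
    IsCoprime (X - C a : ℝ[X]) (X - C b) := by
  apply coprime_X_sub_C_of_eval_ne
  simp [sub_ne_zero, h]

/-- discrete antiderivative -/
lemma antideriv (p : ℝ[X]) : ∃ q : ℝ[X], q.comp (X + C 1) - q = p := by
  suffices H : ∀ (n : ℕ) (p : ℝ[X]), p.natDegree ≤ n → ∃ q : ℝ[X], q.comp (X + C 1) - q = p by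
    exact H p.natDegree p le_rfl
  intro n
  induction n with
  | zero =>
    intro p hp
    have hp0 := Polynomial.eq_C_of_natDegree_le_zero hp
    refine ⟨C (p.coeff 0) * X, ?_⟩
    rw [Polynomial.mul_comp, Polynomial.C_comp, Polynomial.X_comp]
    nth_rewrite 3 [hp0]
    ring_nf
    simp
  | succ n ih =>
    intro p hp
    set c : ℝ := p.coeff (n + 1) / (n + 2) with hc
    set D : ℝ[X] := (X + 1) ^ (n + 2) - X ^ (n + 2) with hD
    have hDcoeff : ∀ j, D.coeff j =
        ((n + 2).choose j : ℝ) - (if j = n + 2 then 1 else 0) := by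
      intro j
      rw [hD, Polynomial.coeff_sub, Polynomial.coeff_X_add_one_pow, Polynomial.coeff_X_pow]
    have hp' : (p - C c * D).natDegree ≤ n := by
      rw [Polynomial.natDegree_le_iff_coeff_eq_zero]
      intro j hj
      rw [Polynomial.coeff_sub, Polynomial.coeff_C_mul, hDcoeff]
      rcases eq_or_lt_of_le (Nat.succ_le_of_lt hj) with hj1 | hj2
      · -- j = n+1
        rw [← hj1]
        simp only [if_neg (by omega : ¬ n + 1 = n + 2)]
        rw [Nat.choose_succ_self_right]
        rw [hc]
        have h2 : ((n:ℝ) + 2) ≠ 0 := by positivity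
        push_cast
        field_simp
        ring
      · -- j ≥ n + 2
        have h0 : p.coeff j = 0 := Polynomial.coeff_eq_zero_of_natDegree_lt (by omega)
        rcases eq_or_lt_of_le (show n + 2 ≤ j by omega) with hj3 | hj4
        · rw [h0, ← hj3]
          simp [Nat.choose_self]
        · rw [h0, Nat.choose_eq_zero_of_lt (by omega)]
          simp only [if_neg (by omega : ¬ j = n + 2)]
          simp
    obtain ⟨q', hq'⟩ := ih _ hp'
    refine ⟨q' + C c * X ^ (n + 2), ?_⟩
    rw [Polynomial.add_comp, Polynomial.mul_comp, Polynomial.C_comp, Polynomial.pow_comp,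
      Polynomial.X_comp]
    have hone : (1 : ℝ[X]) = C 1 := by simp
    calc q'.comp (X + C 1) + C c * (X + C 1) ^ (n + 2) - (q' + C c * X ^ (n + 2))
        = (q'.comp (X + C 1) - q') + C c * ((X + C 1) ^ (n+2) - X ^ (n+2)) := by ring
      _ = p := by rw [hq', ← hone, ← hD]; ring

lemma geo_seq {r : ℝ} (hr : r ≠ 0) (d : ℤ → ℝ) (hstep : ∀ m, d (m + 1) = r * d m) :
    ∀ m : ℤ, d m = d 0 * r ^ m := by
  intro m
  induction m using Int.induction_on with
  | zero => simp
  | succ i ih =>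
    rw [hstep, ih, zpow_add_one₀ hr]; ring
  | pred i ih =>
    have h1 : d (-(i : ℤ)) = r * d (-(i:ℤ) - 1) := by
      have := hstep (-(i:ℤ) - 1); rw [sub_add_cancel] at this; exact this
    have h2 : d (-(i:ℤ) - 1) = d (-(i:ℤ)) / r := by
      field_simp [h1]
      rw [h1]; ring
    rw [h2, ih, zpow_sub_one₀ hr]
    field_simp

/-- structure of the kernel of `(T - r)^k` -/
lemma ker_pow {r : ℝ} (hr : r ≠ 0) (k : ℕ) (v : ℤ → ℝ)
    (hv : L ((X - C r) ^ k) v = 0) :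
    ∃ B : ℝ[X], ∀ m : ℤ, v m = B.eval (m : ℝ) * r ^ m := by
  induction k generalizing v with
  | zero =>
    refine ⟨0, fun m => ?_⟩
    have : v = 0 := by rw [← L_one v, ← pow_zero (X - C r), hv]
    simp [this]
  | succ k ih =>
    set w := L (X - C r) v with hwdef
    have hw0 : L ((X - C r) ^ k) w = 0 := by
      rw [hwdef, ← L_mul, ← pow_succ]; exact hv
    obtain ⟨B₁, hB₁⟩ := ih _ hw0
    obtain ⟨B₂, hB₂⟩ := antideriv (C r⁻¹ * B₁)
    have hB₂' : ∀ t : ℝ, B₂.eval (t + 1) - B₂.eval t = r⁻¹ * B₁.eval t := by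
      intro t
      have := congrArg (Polynomial.eval t) hB₂
      simpa [Polynomial.eval_comp] using this
    set d : ℤ → ℝ := fun m => v m - B₂.eval (m : ℝ) * r ^ m with hd
    have hstep : ∀ m, d (m + 1) = r * d m := by
      intro m
      have hwm : v (m + 1) = w m + r * v m := by
        have := L_X_sub_C r v m
        rw [← hwdef] at this
        linarith [this]
      have hcast : ((m + 1 : ℤ) : ℝ) = (m : ℝ) + 1 := by push_cast; ring
      rw [hd]
      simp only []
      rw [hwm, hB₁, hcast]
      have h2 : B₂.eval ((m:ℝ) + 1) = B₂.eval (m:ℝ) + r⁻¹ * B₁.eval (m:ℝ) := by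
        have := hB₂' (m:ℝ); linarith
      rw [h2, zpow_add_one₀ hr]
      field_simp
      ring
    have hgeo := geo_seq hr d hstep
    refine ⟨B₂ + C (d 0), fun m => ?_⟩
    have : v m = d m + B₂.eval (m:ℝ) * r ^ m := by rw [hd]; ring
    rw [this, hgeo m]
    simp [Polynomial.eval_add]
    ring


lemma exists_bound_above (ρ : ℝ) (S : Multiset ℂ) (hS : ∀ z ∈ S, ‖z‖ < ρ)
    (hρ : 0 < ρ) :
    ∃ M, 0 ≤ M ∧ M < ρ ∧ ∀ z ∈ S, ‖z‖ ≤ M := by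
  induction S using Multiset.induction_on with
  | empty => exact ⟨0, le_rfl, hρ, by simp⟩
  | cons lam S ih =>
    obtain ⟨M, hM0, hMρ, hMb⟩ := ih (fun z hz => hS z (Multiset.mem_cons_of_mem hz))
    refine ⟨max M (‖lam‖), le_trans hM0 (le_max_left _ _),
      max_lt hMρ (hS lam (Multiset.mem_cons_self _ _)), fun z hz => ?_⟩
    rcases Multiset.mem_cons.mp hz with rfl | hz
    · exact le_max_right _ _
    · exact le_trans (hMb z hz) (le_max_left _ _)

lemma exists_bound_below (τ₀ : ℝ) (S : Multiset ℂ) (hS : ∀ z ∈ S, τ₀ < ‖z‖) :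
    ∃ τ, τ₀ < τ ∧ ∀ z ∈ S, τ < ‖z‖ := by
  induction S using Multiset.induction_on with
  | empty => exact ⟨τ₀ + 1, by linarith, by simp⟩
  | cons lam S ih =>
    obtain ⟨τ, hττ₀, hτb⟩ := ih (fun z hz => hS z (Multiset.mem_cons_of_mem hz))
    have hlam := hS lam (Multiset.mem_cons_self _ _)
    refine ⟨min τ ((τ₀ + ‖lam‖) / 2), lt_min hττ₀ (by linarith), fun z hz => ?_⟩
    rcases Multiset.mem_cons.mp hz with rfl | hz
    · exact lt_of_le_of_lt (min_le_right _ _) (by linarith)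
    · exact lt_of_le_of_lt (min_le_left _ _) (hτb z hz)

lemma middle_forward (S : Multiset ℂ) :
    ∀ (h : ℤ → ℂ), L ((S.map (fun z => X - C z)).prod) h = 0 →
    ∀ σ : ℝ, 0 < σ → (∀ z ∈ S, ‖z‖ < σ) →
    ∃ Cc : ℝ, 0 ≤ Cc ∧ ∀ m : ℕ, ‖h (m : ℤ)‖ ≤ Cc * σ ^ m := by
  induction S using Multiset.induction_on with
  | empty =>
    intro h h0 σ hσ _
    have : h = 0 := by
      have := h0; rwa [Multiset.map_zero, Multiset.prod_zero, L_one] at this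
    exact ⟨0, le_rfl, fun m => by simp [this]⟩
  | cons lam S ih =>
    intro h h0 σ hσ hb
    obtain ⟨M, hM0, hMσ, hMb⟩ := exists_bound_above σ (lam ::ₘ S) hb hσ
    set σ' : ℝ := (M + σ) / 2 with hσ'
    have hσ'M : M < σ' := by rw [hσ']; linarith
    have hσ'σ : σ' < σ := by rw [hσ']; linarith
    have hσ'0 : 0 < σ' := by rw [hσ']; linarith
    set h₁ : ℤ → ℂ := L (X - C lam) h with hh₁
    have h₁0 : L ((S.map (fun z => X - C z)).prod) h₁ = 0 := by
      rw [hh₁, ← L_mul, mul_comm]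
      rw [show (X - C lam) * (S.map (fun z => X - C z)).prod
          = ((lam ::ₘ S).map (fun z => X - C z)).prod by
        rw [Multiset.map_cons, Multiset.prod_cons]]
      exact h0
    obtain ⟨Cc, hCc0, hCc⟩ := ih h₁ h₁0 σ' hσ'0
      (fun z hz => lt_of_le_of_lt (hMb z (Multiset.mem_cons_of_mem hz)) hσ'M)
    have hs : (0:ℝ) < σ - σ' := by linarith
    set K : ℝ := ‖h 0‖ + Cc / (σ - σ') with hK
    have hdivnn : 0 ≤ Cc / (σ - σ') := by positivity
    have hK0 : 0 ≤ K := by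
      rw [hK]; have := norm_nonneg (h 0); linarith
    have hKC : Cc ≤ (σ - σ') * K := by
      have h1 : Cc / (σ - σ') ≤ K := by
        rw [hK]; exact le_add_of_nonneg_left (norm_nonneg _)
      rw [div_le_iff₀ hs] at h1
      linarith
    refine ⟨K, hK0, fun m => ?_⟩
    induction m with
    | zero =>
      simp only [Nat.cast_zero, pow_zero, mul_one, hK]
      exact le_add_of_nonneg_right hdivnn
    | succ m ihm =>
      have hrec : h ((m : ℤ) + 1) = lam * h (m : ℤ) + h₁ (m : ℤ) := by
        rw [hh₁, L_X_sub_C]; ring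
      have hlamM : ‖lam‖ ≤ σ' := le_trans (hMb lam (Multiset.mem_cons_self _ _)) hσ'M.le
      have hcast : ((m : ℤ) + 1) = ((m + 1 : ℕ) : ℤ) := by push_cast; ring
      rw [← hcast, hrec]
      calc ‖lam * h (m:ℤ) + h₁ (m:ℤ)‖
          ≤ ‖lam * h (m:ℤ)‖ + ‖h₁ (m:ℤ)‖ := norm_add_le _ _
        _ = ‖lam‖ * ‖h (m:ℤ)‖ + ‖h₁ (m:ℤ)‖ := by
            rw [norm_mul]
        _ ≤ σ' * (K * σ ^ m) + Cc * σ' ^ m := by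
            apply add_le_add
            · apply mul_le_mul hlamM ihm (norm_nonneg _) (by linarith)
            · exact hCc m
        _ ≤ σ' * (K * σ ^ m) + Cc * σ ^ m := by
            have : σ' ^ m ≤ σ ^ m := pow_le_pow_left₀ hσ'0.le hσ'σ.le m
            nlinarith
        _ ≤ K * σ ^ (m + 1) := by
            have hp : 0 ≤ σ ^ m := by positivity
            rw [pow_succ]
            nlinarith
    
lemma middle_backward (S : Multiset ℂ) :
    ∀ (h : ℤ → ℂ), L ((S.map (fun z => X - C z)).prod) h = 0 →
    ∀ τ : ℝ, 0 < τ → (∀ z ∈ S, τ < ‖z‖) →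
    ∃ Cc : ℝ, 0 ≤ Cc ∧ ∀ m : ℕ, ‖h (-(m : ℤ))‖ ≤ Cc * (τ⁻¹) ^ m := by
  induction S using Multiset.induction_on with
  | empty =>
    intro h h0 τ hτ _
    have : h = 0 := by
      have := h0; rwa [Multiset.map_zero, Multiset.prod_zero, L_one] at this
    exact ⟨0, le_rfl, fun m => by simp [this]⟩
  | cons lam S ih =>
    intro h h0 τ hτ hb
    obtain ⟨τ', hττ', hτ'b⟩ := exists_bound_below τ (lam ::ₘ S) hb
    have hτ'0 : 0 < τ' := lt_trans hτ hττ'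
    set h₁ : ℤ → ℂ := L (X - C lam) h with hh₁
    have h₁0 : L ((S.map (fun z => X - C z)).prod) h₁ = 0 := by
      rw [hh₁, ← L_mul, mul_comm]
      rw [show (X - C lam) * (S.map (fun z => X - C z)).prod
          = ((lam ::ₘ S).map (fun z => X - C z)).prod by
        rw [Multiset.map_cons, Multiset.prod_cons]]
      exact h0
    obtain ⟨Cc, hCc0, hCc⟩ := ih h₁ h₁0 τ' hτ'0
      (fun z hz => hτ'b z (Multiset.mem_cons_of_mem hz))
    have hlam : τ' < ‖lam‖ := hτ'b lam (Multiset.mem_cons_self _ _)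
    have hst : (0:ℝ) < τ' - τ := by linarith
    set K : ℝ := ‖h 0‖ + Cc * τ / (τ' * (τ' - τ)) with hK
    have hdivnn : 0 ≤ Cc * τ / (τ' * (τ' - τ)) := by positivity
    have hK0 : 0 ≤ K := by
      rw [hK]; have := norm_nonneg (h 0); linarith
    refine ⟨K, hK0, fun m => ?_⟩
    induction m with
    | zero =>
      simp only [Nat.cast_zero, neg_zero, pow_zero, mul_one, hK]
      exact le_add_of_nonneg_right hdivnn
    | succ m ihm =>
      have hrec : h₁ (-((m:ℤ) + 1)) = h (-(m : ℤ)) - lam * h (-((m:ℤ) + 1)) := by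
        rw [hh₁, L_X_sub_C]
        rw [show -((m:ℤ) + 1) + 1 = -(m:ℤ) by ring]
      have key : ‖lam‖ * ‖h (-((m:ℤ)+1))‖
          ≤ K * τ⁻¹ ^ m + Cc * τ'⁻¹ ^ (m + 1) := by
        calc ‖lam‖ * ‖h (-((m:ℤ)+1))‖
            = ‖lam * h (-((m:ℤ)+1))‖ := (norm_mul _ _).symm
          _ = ‖h (-(m:ℤ)) - h₁ (-((m:ℤ)+1))‖ := by
              rw [hrec]; ring_nf
          _ ≤ ‖h (-(m:ℤ))‖ + ‖h₁ (-((m:ℤ)+1))‖ := by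
              simpa [sub_eq_add_neg] using
                norm_add_le (h (-(m:ℤ))) (-(h₁ (-((m:ℤ)+1))))
          _ ≤ K * τ⁻¹ ^ m + Cc * τ'⁻¹ ^ (m + 1) := by
              apply add_le_add ihm
              have := hCc (m + 1)
              rw [show -(((m+1) : ℕ) : ℤ) = -((m:ℤ)+1) by push_cast; ring] at this
              exact this
      have hgoal : τ' * ‖h (-((m:ℤ)+1))‖ ≤ K * τ⁻¹ ^ m + Cc * τ'⁻¹ ^ (m+1) := by
        refine le_trans ?_ key
        apply mul_le_mul_of_nonneg_right hlam.le (norm_nonneg _)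
      have hmono : τ'⁻¹ ^ m ≤ τ⁻¹ ^ m := by
        apply pow_le_pow_left₀ (by positivity)
        rw [inv_le_inv₀ hτ'0 hτ]
        exact hττ'.le
      have hτinvpos : (0:ℝ) < τ⁻¹ ^ m := by positivity
      rw [show -(((m+1) : ℕ) : ℤ) = -((m:ℤ)+1) by push_cast; ring]
      rw [pow_succ]
      -- goal: abs (h (-(m+1))) ≤ K * (τ⁻¹^m * τ⁻¹)
      have expand : Cc * τ'⁻¹ ^ (m+1) ≤ Cc * τ'⁻¹ * τ⁻¹ ^ m := by
        rw [pow_succ]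
        calc Cc * (τ'⁻¹ ^ m * τ'⁻¹) = Cc * τ'⁻¹ * τ'⁻¹ ^ m := by ring
          _ ≤ Cc * τ'⁻¹ * τ⁻¹ ^ m := by
              apply mul_le_mul_of_nonneg_left hmono (by positivity)
      have hKbig : K + Cc * τ'⁻¹ ≤ K * (τ' / τ) := by
        have hKge : Cc * τ / (τ' * (τ' - τ)) ≤ K := by
          rw [hK]; exact le_add_of_nonneg_left (norm_nonneg _)
        have e1 : Cc * τ / (τ' * (τ' - τ)) * ((τ' - τ)/τ) = Cc * τ'⁻¹ := by
          field_simp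
        have e2 : Cc * τ'⁻¹ ≤ K * ((τ' - τ)/τ) := by
          rw [← e1]
          apply mul_le_mul_of_nonneg_right hKge (by positivity)
        have ha : K * (τ' / τ) = K + K * ((τ' - τ)/τ) := by
          field_simp; ring
        linarith
      have final : τ' * ‖h (-((m:ℤ)+1))‖ ≤ τ' * (K * (τ⁻¹ ^ m * τ⁻¹)) := by
        calc τ' * ‖h (-((m:ℤ)+1))‖ ≤ K * τ⁻¹ ^ m + Cc * τ'⁻¹ ^ (m+1) := hgoal
          _ ≤ K * τ⁻¹ ^ m + Cc * τ'⁻¹ * τ⁻¹ ^ m := by linarith [expand]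
          _ = (K + Cc * τ'⁻¹) * τ⁻¹ ^ m := by ring
          _ ≤ K * (τ' / τ) * τ⁻¹ ^ m := by
              apply mul_le_mul_of_nonneg_right hKbig hτinvpos.le
          _ = τ' * (K * (τ⁻¹ ^ m * τ⁻¹)) := by
              field_simp
      exact le_of_mul_le_mul_left final hτ'0


open Filter in
lemma poly_ratio (p : ℝ[X]) (hp : p ≠ 0) (c : ℝ) :
    Tendsto (fun t : ℝ => p.eval (t + c) / p.eval t) atTop (nhds 1) := by
  set q : ℝ[X] := p.comp (X + C c) with hq
  have hdeg : q.natDegree = p.natDegree := by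
    rw [hq, Polynomial.natDegree_comp, Polynomial.natDegree_X_add_C, mul_one]
  have hlead : q.leadingCoeff = p.leadingCoeff := by
    rw [hq, Polynomial.leadingCoeff_comp (by rw [Polynomial.natDegree_X_add_C]; omega),
      Polynomial.leadingCoeff_X_add_C, one_pow, mul_one]
  have h1 : Asymptotics.IsEquivalent atTop (fun t => q.eval t) (fun t => p.eval t) := by
    apply (Polynomial.isEquivalent_atTop_lead q).trans
    rw [hdeg, hlead]
    exact (Polynomial.isEquivalent_atTop_lead p).symm
  have h2 : ∀ᶠ t : ℝ in atTop, p.eval t ≠ 0 := by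
    filter_upwards [Polynomial.eventually_no_roots p hp] with t ht
    exact ht
  have h3 := (Asymptotics.isEquivalent_iff_tendsto_one h2).mp h1
  refine h3.congr (fun t => ?_)
  show Polynomial.eval t q / Polynomial.eval t p = _
  rw [hq, Polynomial.eval_comp]
  simp

open Filter in
lemma poly_sign (p : ℝ[X]) (hp : p ≠ 0) :
    ∃ s : ℝ, (s = 1 ∨ s = -1) ∧ ∃ cp : ℝ, 0 < cp ∧
      ∀ᶠ t : ℝ in atTop, cp ≤ s * p.eval t := by
  rcases Nat.eq_zero_or_pos p.natDegree with h0 | hpos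
  · have hC := Polynomial.eq_C_of_natDegree_le_zero h0.le
    have ha : p.coeff 0 ≠ 0 := by
      intro h; apply hp; rw [hC, h, Polynomial.C_0]
    rcases lt_or_gt_of_ne ha with hneg | hposa
    · refine ⟨-1, Or.inr rfl, -(p.coeff 0), by linarith, ?_⟩
      filter_upwards with t
      rw [hC]; simp
    · refine ⟨1, Or.inl rfl, p.coeff 0, hposa, ?_⟩
      filter_upwards with t
      rw [hC]; simp
  · have hdeg : 0 < p.degree := Polynomial.natDegree_pos_iff_degree_pos.mp hpos
    rcases le_or_gt 0 p.leadingCoeff with hl | hl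
    · have := Polynomial.tendsto_atTop_of_leadingCoeff_nonneg p hdeg hl
      refine ⟨1, Or.inl rfl, 1, one_pos, ?_⟩
      filter_upwards [this.eventually_ge_atTop 1] with t ht
      simpa using ht
    · have := Polynomial.tendsto_atBot_of_leadingCoeff_nonpos p hdeg hl.le
      refine ⟨-1, Or.inr rfl, 1, one_pos, ?_⟩
      filter_upwards [this.eventually_le_atBot (-1)] with t ht
      simp only [neg_mul, one_mul]
      linarith


set_option maxHeartbeats 2000000 in
open Filter in
lemma main_asymp (T W : ℕ → ℝ) (p : ℝ[X]) (hp : p ≠ 0) (r σ Cw : ℝ)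
    (hr : r < -1) (hσ0 : 0 < σ) (hσ : σ < -r)
    (hT : ∀ t : ℕ, T t = p.eval (t : ℝ) * r ^ t + W t)
    (hW : ∀ t : ℕ, |W t| ≤ Cw * σ ^ t) :
    ∃ ε : ℕ, ε ≤ 1 ∧
      Tendsto (fun j => T (ε + 2*j)) atTop atTop ∧
      Tendsto (fun j => T (ε + 2*j + 1)) atTop atBot ∧
      (∀ k : ℕ, Tendsto (fun j => T (ε + 2*(j+k)) / T (ε + 2*j)) atTop
        (nhds ((r^2)^k))) := by
  have hCw0 : 0 ≤ Cw := le_trans (abs_nonneg _) (by simpa using hW 0)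
  obtain ⟨s, hs, cp, hcp, hev⟩ := poly_sign p hp
  have hs0 : s ≠ 0 := by rcases hs with rfl | rfl <;> norm_num
  have hss : s * s = 1 := by rcases hs with rfl | rfl <;> norm_num
  set ε : ℕ := if s = 1 then 0 else 1 with hεdef
  have hεle : ε ≤ 1 := by rw [hεdef]; split <;> norm_num
  have hrneg : r < 0 := by linarith
  have hmr : (1:ℝ) < -r := by linarith
  set R : ℝ := r^2 with hRdef
  have hR1 : 1 < R := by rw [hRdef]; nlinarith
  have hR0 : 0 < R := by linarith
  have hsr : s * r ^ ε = (-r) ^ ε := by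
    rcases hs with rfl | rfl
    · rw [hεdef]; simp
    · rw [hεdef]; norm_num
  set G : ℕ → ℝ := fun t => s * p.eval (t:ℝ) with hGdef
  have hGev : ∀ᶠ t : ℕ in atTop, cp ≤ G t := tendsto_natCast_atTop_atTop.eventually hev
  have hmain : ∀ (e j : ℕ), p.eval ((e + 2*j : ℕ):ℝ) * r ^ (e + 2*j)
      = G (e + 2*j) * ((s * r ^ e) * R ^ j) := by
    intro e j
    have h1 : p.eval (((e + 2*j : ℕ)):ℝ) = s * G (e + 2*j) := by
      rw [hGdef]
      simp only []
      rw [← mul_assoc, hss, one_mul]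
    rw [h1, pow_add, pow_mul, ← hRdef]
    ring
  -- offset tendsto
  have hparity : ∀ e : ℕ, Tendsto (fun j => e + 2*j) atTop atTop := by
    intro e
    apply tendsto_atTop_mono (fun j => by omega : ∀ j : ℕ, j ≤ e + 2*j) tendsto_id
  have hGoff : ∀ e : ℕ, ∀ᶠ j : ℕ in atTop, cp ≤ G (e + 2*j) :=
    fun e => (hparity e).eventually hGev
  -- error bound with general offset
  have hWoff : ∀ (e : ℕ) (η : ℝ), 0 < η → ∀ᶠ j : ℕ in atTop, |W (e + 2*j)| ≤ η * R ^ j := by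
    intro e η hη
    have hσR : σ^2 / R < 1 := by
      rw [div_lt_one hR0, hRdef]; nlinarith
    have hσR0 : 0 ≤ σ^2 / R := by positivity
    have hgeo : Tendsto (fun j : ℕ => (Cw * σ ^ e) * (σ^2/R)^j) atTop (nhds 0) := by
      have := tendsto_pow_atTop_nhds_zero_of_lt_one hσR0 hσR
      simpa using this.const_mul (Cw * σ ^ e)
    filter_upwards [hgeo.eventually (eventually_le_nhds hη)] with j hj
    have h1 : |W (e + 2*j)| ≤ (Cw * σ ^ e) * (σ^2)^j := by
      have := hW (e + 2*j)
      rw [pow_add, pow_mul] at this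
      calc |W (e+2*j)| ≤ Cw * (σ ^ e * (σ^2)^j) := this
        _ = (Cw * σ ^ e) * (σ^2)^j := by ring
    have h2 : (Cw * σ ^ e) * (σ^2)^j = ((Cw * σ ^ e) * (σ^2/R)^j) * R^j := by
      rw [div_pow]
      field_simp
    calc |W (e+2*j)| ≤ (Cw * σ ^ e) * (σ^2)^j := h1
      _ = ((Cw * σ ^ e) * (σ^2/R)^j) * R^j := h2
      _ ≤ η * R^j := by
          apply mul_le_mul_of_nonneg_right hj (by positivity)
  set D : ℝ := (-r) ^ ε with hDdef
  have hD0 : 0 < D := by rw [hDdef]; positivity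
  set E : ℕ → ℝ := fun j => G (ε + 2*j) * (D * R ^ j) with hEdef
  set c₀ : ℝ := cp * D with hc₀
  have hc₀0 : 0 < c₀ := by rw [hc₀]; positivity
  have hTE : ∀ j, T (ε + 2*j) = E j + W (ε + 2*j) := by
    intro j
    rw [hT, hmain ε j, hsr]
  have hE_lb : ∀ᶠ j : ℕ in atTop, c₀ * R ^ j ≤ E j := by
    filter_upwards [hGoff ε] with j hj
    rw [hEdef, hc₀]
    simp only []
    have : (0:ℝ) ≤ D * R ^ j := by positivity
    nlinarith
  have hRtop : Tendsto (fun j : ℕ => R ^ j) atTop atTop :=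
    tendsto_pow_atTop_atTop_of_one_lt hR1
  -- (i)
  have hTtop : Tendsto (fun j => T (ε + 2*j)) atTop atTop := by
    apply tendsto_atTop_mono' atTop (f₁ := fun j => (c₀/2) * R ^ j)
    · filter_upwards [hE_lb, hWoff ε (c₀/2) (by linarith)] with j h1 h2
      have := abs_le.mp h2
      rw [hTE j]
      nlinarith
    · exact hRtop.const_mul_atTop (by linarith)
  -- (iv)
  have hTbot : Tendsto (fun j => T (ε + 2*j + 1)) atTop atBot := by
    set c₁ : ℝ := cp * (-r)^(ε+1) with hc₁
    have hc₁0 : 0 < c₁ := by rw [hc₁]; positivity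
    apply tendsto_atBot_mono' atTop (f₁ := fun j => -((c₁/2) * R ^ j))
    · have heq : ∀ j : ℕ, ε + 2*j + 1 = (ε + 1) + 2*j := fun j => by omega
      filter_upwards [hGoff (ε+1), hWoff (ε+1) (c₁/2) (by linarith)] with j h1 h2
      have habs := abs_le.mp h2
      rw [heq j, hT, hmain (ε+1) j]
      have hsr1 : s * r ^ (ε+1) = -(-r)^(ε+1) := by
        rw [pow_succ, pow_succ, ← mul_assoc, hsr]; ring
      rw [hsr1]
      have hRj : (0:ℝ) < R ^ j := by positivity
      have : cp * ((-r)^(ε+1) * R ^ j) ≤ G ((ε+1) + 2*j) * ((-r)^(ε+1) * R^j) := by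
        apply mul_le_mul_of_nonneg_right h1 (by positivity)
      rw [hc₁] at *
      nlinarith
    · have : Tendsto (fun j : ℕ => (c₁/2) * R ^ j) atTop atTop :=
        hRtop.const_mul_atTop (by linarith)
      exact tendsto_neg_atTop_atBot.comp this
  -- T/E → 1
  have hEpos : ∀ᶠ j : ℕ in atTop, 0 < E j := by
    filter_upwards [hE_lb] with j hj
    have : (0:ℝ) < c₀ * R ^ j := by positivity
    linarith
  have hWE : Tendsto (fun j => W (ε + 2*j) / E j) atTop (nhds 0) := by
    apply squeeze_zero_norm' (a := fun j => ((Cw * σ ^ ε)/c₀) * (σ^2/R)^j)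
    · filter_upwards [hE_lb] with j hj
      rw [Real.norm_eq_abs, abs_div]
      have hEj : 0 < E j := lt_of_lt_of_le (by positivity) hj
      rw [abs_of_pos hEj, div_le_iff₀ hEj]
      have h1 : |W (ε + 2*j)| ≤ (Cw * σ ^ ε) * (σ^2)^j := by
        have := hW (ε + 2*j)
        rw [pow_add, pow_mul] at this
        calc |W (ε+2*j)| ≤ Cw * (σ ^ ε * (σ^2)^j) := this
          _ = (Cw * σ ^ ε) * (σ^2)^j := by ring
      have h2 : ((Cw * σ ^ ε)/c₀) * (σ^2/R)^j * (c₀ * R^j) = (Cw * σ ^ ε) * (σ^2)^j := by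
        rw [div_pow]
        field_simp
      have h3 : ((Cw * σ ^ ε)/c₀) * (σ^2/R)^j * (c₀ * R^j)
          ≤ ((Cw * σ ^ ε)/c₀) * (σ^2/R)^j * E j := by
        apply mul_le_mul_of_nonneg_left hj (by positivity)
      linarith
    · have h4 : σ^2 / R < 1 := by
        rw [div_lt_one hR0, hRdef]; nlinarith
      have := tendsto_pow_atTop_nhds_zero_of_lt_one (by positivity : (0:ℝ) ≤ σ^2/R) h4
      simpa using this.const_mul ((Cw * σ ^ ε)/c₀)
  have hTdivE : Tendsto (fun j => T (ε + 2*j) / E j) atTop (nhds 1) := by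
    have h1 : Tendsto (fun j : ℕ => 1 + W (ε + 2*j) / E j) atTop (nhds 1) := by
      have := (tendsto_const_nhds (x := (1:ℝ)) (f := atTop (α := ℕ))).add hWE
      simpa using this
    apply h1.congr'
    filter_upwards [hEpos] with j hj
    rw [hTE j, add_div, div_self hj.ne']
  refine ⟨ε, hεle, hTtop, hTbot, fun k => ?_⟩
  -- ratio limit
  have hshift : Tendsto (fun j => T (ε + 2*(j+k)) / E (j+k)) atTop (nhds 1) :=
    hTdivE.comp (tendsto_add_atTop_nat k)
  have hGratio : Tendsto (fun j => G (ε + 2*(j+k)) / G (ε + 2*j)) atTop (nhds 1) := by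
    have hcast : Tendsto (fun j : ℕ => ((ε + 2*j : ℕ) : ℝ)) atTop atTop :=
      tendsto_natCast_atTop_atTop.comp (hparity ε)
    have := (poly_ratio p hp (2*k : ℕ)).comp hcast
    apply this.congr (fun j => ?_)
    show p.eval (((ε + 2*j : ℕ):ℝ) + (2*k:ℕ)) / p.eval ((ε + 2*j : ℕ):ℝ) = _
    have harg : (((ε + 2*j : ℕ):ℝ) + (2*k:ℕ)) = ((ε + 2*(j+k) : ℕ):ℝ) := by
      push_cast; ring
    rw [harg, hGdef]
    simp only []
    rw [mul_div_mul_left _ _ hs0]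
  have hEinvT : Tendsto (fun j => E j / T (ε + 2*j)) atTop (nhds 1) := by
    have h1 := hTdivE.inv₀ one_ne_zero
    rw [inv_one] at h1
    apply h1.congr (fun j => ?_)
    exact inv_div _ _
  have hB : Tendsto (fun j => (G (ε + 2*(j+k)) / G (ε + 2*j)) * R ^ k) atTop
      (nhds (R ^ k)) := by
    have := hGratio.mul_const (R ^ k)
    simpa using this
  have hP : Tendsto (fun j => (T (ε + 2*(j+k)) / E (j+k))
      * ((G (ε + 2*(j+k)) / G (ε + 2*j)) * R ^ k)
      * (E j / T (ε + 2*j))) atTop (nhds (R ^ k)) := by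
    have := (hshift.mul hB).mul hEinvT
    simpa using this
  apply hP.congr'
  have hGoffk : ∀ᶠ j : ℕ in atTop, cp ≤ G (ε + 2*(j+k)) :=
    (tendsto_add_atTop_nat k).eventually (hGoff ε)
  have hTpos : ∀ᶠ j : ℕ in atTop, 0 < T (ε + 2*j) := hTtop.eventually_gt_atTop 0
  filter_upwards [hGoff ε, hGoffk, hTpos] with j hG1 hG2 hT1
  have hG1' : G (ε+2*j) ≠ 0 := (lt_of_lt_of_le hcp hG1).ne'
  have hG2' : G (ε+2*(j+k)) ≠ 0 := (lt_of_lt_of_le hcp hG2).ne'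
  have hT1' : T (ε+2*j) ≠ 0 := hT1.ne'
  have hD' : D ≠ 0 := hD0.ne'
  have hR' : R ≠ 0 := hR0.ne'
  rw [hEdef]
  simp only []
  rw [pow_add R j k]
  field_simp


lemma orbit_iterate {f : ℝ → ℝ} {u : ℤ → ℝ} (hstep : ∀ m, u (m+1) = f (u m)) :
    ∀ (m : ℤ) (k : ℕ), u (m + k) = f^[k] (u m) := by
  intro m k
  induction k with
  | zero => simp
  | succ k ih =>
    rw [show m + ((k+1 : ℕ):ℤ) = (m + k) + 1 by push_cast; ring, hstep,
      Function.iterate_succ_apply', ih]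

lemma exists_orbit {f : ℝ → ℝ} {I : Set ℝ} (hbij : Set.BijOn f I I) {x : ℝ} (hx : x ∈ I) :
    ∃ u : ℤ → ℝ, u 0 = x ∧ (∀ m, u m ∈ I) ∧ (∀ m, u (m+1) = f (u m)) := by
  classical
  set g := Function.invFunOn f I with hg
  have hgmaps : Set.MapsTo g I I := hbij.surjOn.mapsTo_invFunOn
  have hfg : ∀ z ∈ I, f (g z) = z := fun z hz => hbij.surjOn.rightInvOn_invFunOn hz
  refine ⟨fun m => if 0 ≤ m then f^[m.toNat] x else g^[(-m).toNat] x, by simp, ?_, ?_⟩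
  · intro m
    by_cases h : 0 ≤ m
    · simp only [if_pos h]; exact hbij.mapsTo.iterate _ hx
    · simp only [if_neg h]; exact hgmaps.iterate _ hx
  · intro m
    by_cases h : 0 ≤ m
    · have h1 : 0 ≤ m + 1 := by omega
      simp only [if_pos h, if_pos h1]
      have h2 : (m+1).toNat = m.toNat + 1 := by omega
      rw [h2, Function.iterate_succ_apply']
    · by_cases h2 : m = -1
      · subst h2
        have e1 : ¬ (0 ≤ (-1 : ℤ)) := by norm_num
        have e2 : (0:ℤ) + 1 = 0 + 1 := rfl
        simp only [if_neg e1, show (-1 : ℤ) + 1 = 0 from by ring, if_pos (le_refl (0:ℤ))]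
        have e3 : ((-(-1) : ℤ)).toNat = 1 := by norm_num
        have e0 : ((0:ℤ).toNat) = 0 := rfl
        rw [e3, e0, Function.iterate_one, Function.iterate_zero, id_eq]
        exact (hfg x hx).symm
      · have h3 : ¬ (0 ≤ m + 1) := by omega
        simp only [if_neg h, if_neg h3]
        have h4 : (-m).toNat = (-(m+1)).toNat + 1 := by omega
        rw [h4, Function.iterate_succ_apply']
        rw [hfg _ (hgmaps.iterate _ hx)]

lemma injOn_of_eq (I : Set ℝ) (f : ℝ → ℝ) (n : ℕ) (a : ℕ → ℝ) (ha0 : a 0 ≠ 0)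
    (heq : ∀ x ∈ I, ∑ k ∈ Finset.range (n + 1), a k * f^[k] x = 0) :
    Set.InjOn f I := by
  intro w hw v hv hfwv
  have h1 := heq w hw
  have h2 := heq v hv
  rw [Finset.sum_range_succ'] at h1 h2
  have h3 : ∑ i ∈ Finset.range n, a (i+1) * f^[i+1] w
      = ∑ i ∈ Finset.range n, a (i+1) * f^[i+1] v := by
    apply Finset.sum_congr rfl
    intro i _
    rw [Function.iterate_succ_apply, Function.iterate_succ_apply, hfwv]
  simp only [Function.iterate_zero_apply] at h1 h2
  apply mul_left_cancel₀ ha0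
  rw [h3] at h1
  linarith

lemma mono_dichotomy {I : Set ℝ} (hI : I.OrdConnected) {f : ℝ → ℝ}
    (hcont : ContinuousOn f I) (hinj : Set.InjOn f I) {a b : ℝ} (ha : a ∈ I) (hb : b ∈ I)
    (hab : a < b) : StrictMonoOn f I ∨ StrictAntiOn f I := by
  have key : ∀ x ∈ I, ∀ y ∈ I, x < y →
      (f a ≤ f b → f x < f y) ∧ (f b ≤ f a → f y < f x) := by
    intro x hx y hy hxy
    set lo := min a x with hlo
    set hi := max b y with hhi
    have hloI : lo ∈ I := by
      rcases min_cases a x with ⟨h1, _⟩ | ⟨h1, _⟩ <;> rw [hlo, h1] <;> assumption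
    have hhiI : hi ∈ I := by
      rcases max_cases b y with ⟨h1, _⟩ | ⟨h1, _⟩ <;> rw [hhi, h1] <;> assumption
    have hsub : Set.Icc lo hi ⊆ I := hI.out hloI hhiI
    have hlohi : lo ≤ hi := by
      have : lo ≤ a := min_le_left _ _
      have : b ≤ hi := le_max_left _ _
      have := hab
      simp only [hlo, hhi]
      apply le_trans (min_le_left _ _) (le_trans hab.le (le_max_left _ _))
    have haI : a ∈ Set.Icc lo hi :=
      ⟨min_le_left _ _, le_trans hab.le (le_max_left _ _)⟩
    have hbI : b ∈ Set.Icc lo hi :=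
      ⟨le_trans (min_le_left _ _) hab.le, le_max_left _ _⟩
    have hxI : x ∈ Set.Icc lo hi :=
      ⟨min_le_right _ _, le_trans hxy.le (le_max_right _ _)⟩
    have hyI : y ∈ Set.Icc lo hi :=
      ⟨le_trans (min_le_right _ _) hxy.le, le_max_right _ _⟩
    rcases ContinuousOn.strictMonoOn_of_injOn_Icc' hlohi (hcont.mono hsub)
        (hinj.mono hsub) with hm | hm
    · constructor
      · intro _; exact hm hxI hyI hxy
      · intro hba
        have h5 := hm haI hbI hab
        exfalso; linarith
    · constructor
      · intro hab'
        have h5 := hm haI hbI hab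
        exfalso; linarith
      · intro _; exact hm hxI hyI hxy
  rcases le_total (f a) (f b) with h | h
  · left; intro x hx y hy hxy; exact (key x hx y hy hxy).1 h
  · right; intro x hx y hy hxy; exact (key x hx y hy hxy).2 h

lemma iterate_two_mono {f : ℝ → ℝ} {I : Set ℝ} (hanti : StrictAntiOn f I)
    (hmap : Set.MapsTo f I I) :
    ∀ k : ℕ, ∀ x ∈ I, ∀ y ∈ I, x ≤ y → f^[2*k] x ≤ f^[2*k] y := by
  intro k
  induction k with
  | zero => intro x _ y _ h; simpa using h
  | succ k ih =>
    intro x hx y hy hxy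
    have e2 : ∀ z : ℝ, f^[2] z = f (f z) := fun z => rfl
    have h2 : f^[2] x ≤ f^[2] y := by
      rcases eq_or_lt_of_le hxy with rfl | hlt
      · exact le_refl _
      · have ha1 : f y < f x := hanti hx hy hlt
        have ha2 : f (f x) < f (f y) := hanti (hmap hy) (hmap hx) ha1
        rw [e2, e2]
        exact ha2.le
    have hx2 : f^[2] x ∈ I := (hmap.iterate 2) hx
    have hy2 : f^[2] y ∈ I := (hmap.iterate 2) hy
    have harith : 2*(k+1) = 2*k + 2 := by ring
    rw [harith, Function.iterate_add_apply, Function.iterate_add_apply]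
    exact ih _ hx2 _ hy2 h2


lemma coeff_charsum (a : ℕ → ℝ) (n : ℕ) (j : ℕ) :
    (∑ i ∈ Finset.range (n+1), C (a i) * X ^ i).coeff j = if j < n + 1 then a j else 0 := by
  rw [Polynomial.finset_sum_coeff]
  have h : ∀ i ∈ Finset.range (n+1), (C (a i) * X ^ i).coeff j
      = if j = i then a i else 0 := by
    intro i _
    rw [Polynomial.coeff_C_mul, Polynomial.coeff_X_pow]
    split <;> simp
  rw [Finset.sum_congr rfl h, Finset.sum_ite_eq (Finset.range (n+1)) j a]
  simp [Finset.mem_range]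

noncomputable def natext (f : ℝ → ℝ) (x : ℝ) : ℤ → ℝ := fun m => f^[m.toNat] x

lemma sum_eq_L_natext (p : ℝ[X]) (f : ℝ → ℝ) (x : ℝ) :
    ∑ k ∈ Finset.range (p.natDegree + 1), p.coeff k * f^[k] x = L p (natext f x) 0 := by
  rw [L_apply_range p (lt_add_one _)]
  apply Finset.sum_congr rfl
  intro k _
  congr 1
  show f^[k] x = natext f x (0 + k)
  unfold natext
  congr 1
  omega

lemma L_natext_eq_zero (Rp : ℝ[X]) (f : ℝ → ℝ) (I : Set ℝ) (hmap : Set.MapsTo f I I)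
    (x : ℝ) (hx : x ∈ I)
    (hred : ∀ y ∈ I, ∑ k ∈ Finset.range (Rp.natDegree + 1), Rp.coeff k * f^[k] y = 0) :
    ∀ m : ℤ, 0 ≤ m → L Rp (natext f x) m = 0 := by
  intro m hm
  rw [L_apply_range Rp (lt_add_one _)]
  have hy : f^[m.toNat] x ∈ I := hmap.iterate _ hx
  rw [← hred _ hy]
  apply Finset.sum_congr rfl
  intro k _
  congr 1
  show natext f x (m + k) = f^[k] (f^[m.toNat] x)
  rw [← Function.iterate_add_apply]
  unfold natext
  congr 1
  omega

lemma full_from_reduced (D Rp : ℝ[X]) (f : ℝ → ℝ) (I : Set ℝ) (hmap : Set.MapsTo f I I)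
    (x : ℝ) (hx : x ∈ I)
    (hred : ∀ y ∈ I, ∑ k ∈ Finset.range (Rp.natDegree + 1), Rp.coeff k * f^[k] y = 0) :
    L (D * Rp) (natext f x) 0 = 0 := by
  rw [L_mul, L_apply_range D (lt_add_one _)]
  apply Finset.sum_eq_zero
  intro k _
  rw [L_natext_eq_zero Rp f I hmap x hx hred (0 + k) (by omega), mul_zero]

open Filter in
lemma kernel_root_bound_fwd (pr : ℝ[X]) (hm : pr.Monic) (W : ℤ → ℝ) (hW : L pr W = 0)
    (σ : ℝ) (hσ0 : 0 < σ)
    (hroots : ∀ z ∈ (pr.map (algebraMap ℝ ℂ)).roots, ‖z‖ < σ) :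
    ∃ Cc : ℝ, 0 ≤ Cc ∧ ∀ m : ℕ, |W (m:ℤ)| ≤ Cc * σ ^ m := by
  set prC := pr.map (algebraMap ℝ ℂ) with hprC
  have hmC : prC.Monic := hm.map _
  have hprod : prC = (prC.roots.map (fun z => X - C z)).prod :=
    (IsAlgClosed.splits prC).eq_prod_roots_of_monic hmC
  have hLC : L prC (fun m => ((W m : ℝ) : ℂ)) = 0 := by
    funext m
    rw [L_map pr W m, congrFun hW m]
    simp
  rw [hprod] at hLC
  obtain ⟨Cc, h0, hb⟩ := middle_forward prC.roots _ hLC σ hσ0 hroots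
  exact ⟨Cc, h0, fun m => by have := hb m; rwa [Complex.norm_real, Real.norm_eq_abs] at this⟩

open Filter in
lemma kernel_root_bound_bwd (pr : ℝ[X]) (hm : pr.Monic) (W : ℤ → ℝ) (hW : L pr W = 0)
    (τ : ℝ) (hτ0 : 0 < τ)
    (hroots : ∀ z ∈ (pr.map (algebraMap ℝ ℂ)).roots, τ < ‖z‖) :
    ∃ Cc : ℝ, 0 ≤ Cc ∧ ∀ m : ℕ, |W (-(m:ℤ))| ≤ Cc * (τ⁻¹) ^ m := by
  set prC := pr.map (algebraMap ℝ ℂ) with hprC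
  have hmC : prC.Monic := hm.map _
  have hprod : prC = (prC.roots.map (fun z => X - C z)).prod :=
    (IsAlgClosed.splits prC).eq_prod_roots_of_monic hmC
  have hLC : L prC (fun m => ((W m : ℝ) : ℂ)) = 0 := by
    funext m
    rw [L_map pr W m, congrFun hW m]
    simp
  rw [hprod] at hLC
  obtain ⟨Cc, h0, hb⟩ := middle_backward prC.roots _ hLC τ hτ0 hroots
  exact ⟨Cc, h0, fun m => by have := hb m; rwa [Complex.norm_real, Real.norm_eq_abs] at this⟩

lemma roots_pow_mul_mem (r : ℝ) (k : ℕ) (Q : ℝ[X]) (hQ : Q.Monic) :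
    ∀ z ∈ (((X - C r)^k * Q).map (algebraMap ℝ ℂ)).roots,
      z = ((r : ℝ) : ℂ) ∨ z ∈ (Q.map (algebraMap ℝ ℂ)).roots := by
  intro z hz
  rw [Polynomial.map_mul, Polynomial.map_pow, Polynomial.map_sub, Polynomial.map_X,
    Polynomial.map_C] at hz
  have hne1 : ((X : ℂ[X]) - C ((algebraMap ℝ ℂ) r)) ^ k ≠ 0 :=
    pow_ne_zero _ (Polynomial.X_sub_C_ne_zero _)
  have hne2 : Q.map (algebraMap ℝ ℂ) ≠ 0 := (hQ.map _).ne_zero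
  rw [Polynomial.roots_mul (mul_ne_zero hne1 hne2), Multiset.mem_add] at hz
  rcases hz with hz | hz
  · left
    rw [Polynomial.roots_pow, Polynomial.roots_X_sub_C] at hz
    have := (Multiset.mem_nsmul.mp hz).2
    simpa using this
  · right; exact hz


open Filter in
lemma forward_app (u : ℤ → ℝ) (r₁ r₂ : ℝ) (hr₁ : r₁ < -1) (hr₂ : -1 < r₂) (hr₂0 : r₂ < 0)
    (k₂ : ℕ) (Q : ℝ[X]) (hQ : Q.Monic)
    (hroots : ∀ z ∈ (Q.map (algebraMap ℝ ℂ)).roots,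
      |r₂| < ‖z‖ ∧ ‖z‖ < |r₁|)
    (A : ℝ[X]) (hA : A ≠ 0) (w₁ w₂ w₃ : ℤ → ℝ)
    (hu : u = w₁ + w₂ + w₃)
    (hw₁v : ∀ m : ℤ, w₁ m = A.eval (m:ℝ) * r₁ ^ m)
    (hw₂ : L ((X - C r₂)^k₂) w₂ = 0) (hw₃ : L Q w₃ = 0) :
    ∃ ε : ℕ, ε ≤ 1 ∧
      Tendsto (fun j => u ((ε + 2*j : ℕ) : ℤ)) atTop atTop ∧
      Tendsto (fun j => u ((ε + 2*j + 1 : ℕ) : ℤ)) atTop atBot ∧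
      ∀ k : ℕ, Tendsto (fun j => u ((ε + 2*(j+k) : ℕ):ℤ) / u ((ε + 2*j : ℕ):ℤ))
        atTop (nhds ((r₁^2)^k)) := by
  have habs₁ : |r₁| = -r₁ := abs_of_neg (by linarith)
  have habs₂ : |r₂| = -r₂ := abs_of_neg (by linarith)
  set pr : ℝ[X] := (X - C r₂)^k₂ * Q with hpr
  have hprM : pr.Monic := Polynomial.Monic.mul ((Polynomial.monic_X_sub_C r₂).pow k₂) hQ
  have hLW : L pr (fun m => w₂ m + w₃ m) = 0 := by
    have h1 : L pr w₂ = 0 := by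
      rw [hpr, mul_comm, L_mul, hw₂, L_seq_zero]
    have h2 : L pr w₃ = 0 := by
      rw [hpr, L_mul, hw₃, L_seq_zero]
    have h3 := L_seq_add pr w₂ w₃
    rw [show (fun m => w₂ m + w₃ m) = w₂ + w₃ from rfl, h3, h1, h2, add_zero]
  have hrb : ∀ z ∈ (pr.map (algebraMap ℝ ℂ)).roots, ‖z‖ < |r₁| := by
    intro z hz
    rcases roots_pow_mul_mem r₂ k₂ Q hQ z hz with rfl | hz'
    · rw [Complex.norm_real, Real.norm_eq_abs]
      rw [habs₁, habs₂]; linarith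
    · exact (hroots z hz').2
  obtain ⟨M, hM0, hMρ, hMb⟩ := exists_bound_above |r₁| (pr.map (algebraMap ℝ ℂ)).roots hrb
    (by rw [habs₁]; linarith)
  set σ : ℝ := (M + |r₁|)/2 with hσdef
  have hσ0 : 0 < σ := by rw [hσdef, habs₁]; nlinarith
  have hσρ : σ < |r₁| := by rw [hσdef]; linarith
  obtain ⟨Cc, hCc0, hCb⟩ := kernel_root_bound_fwd pr hprM _ hLW σ hσ0
    (fun z hz => lt_of_le_of_lt (hMb z hz) (by rw [hσdef]; linarith))
  have hmas := main_asymp (fun t : ℕ => u (t:ℤ)) (fun t : ℕ => w₂ (t:ℤ) + w₃ (t:ℤ))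
    A hA r₁ σ Cc hr₁ hσ0 (by rw [habs₁] at hσρ; exact hσρ) ?_ ?_
  · obtain ⟨ε, hε, h1, h2, h3⟩ := hmas
    exact ⟨ε, hε, h1, h2, h3⟩
  · intro t
    show u ((t:ℕ):ℤ) = A.eval ((t:ℕ):ℝ) * r₁ ^ t + (w₂ ((t:ℕ):ℤ) + w₃ ((t:ℕ):ℤ))
    have h1 : u (t:ℤ) = w₁ (t:ℤ) + w₂ (t:ℤ) + w₃ (t:ℤ) := by rw [hu]; rfl
    rw [h1, hw₁v (t:ℤ)]
    have h2 : ((t:ℤ):ℝ) = (t:ℝ) := by push_cast; rfl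
    have h3 : r₁ ^ (t:ℤ) = r₁ ^ t := zpow_natCast r₁ t
    rw [h2, h3]
    ring
  · intro t
    show |w₂ ((t:ℕ):ℤ) + w₃ ((t:ℕ):ℤ)| ≤ Cc * σ ^ t
    exact hCb t

open Filter in
lemma backward_app (u : ℤ → ℝ) (r₁ r₂ : ℝ) (hr₁ : r₁ < -1) (hr₂ : -1 < r₂) (hr₂0 : r₂ < 0)
    (k₁ : ℕ) (Q : ℝ[X]) (hQ : Q.Monic)
    (hroots : ∀ z ∈ (Q.map (algebraMap ℝ ℂ)).roots,
      |r₂| < ‖z‖ ∧ ‖z‖ < |r₁|)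
    (B : ℝ[X]) (hB : B ≠ 0) (w₁ w₂ w₃ : ℤ → ℝ)
    (hu : u = w₁ + w₂ + w₃)
    (hw₂v : ∀ m : ℤ, w₂ m = B.eval (m:ℝ) * r₂ ^ m)
    (hw₁ : L ((X - C r₁)^k₁) w₁ = 0) (hw₃ : L Q w₃ = 0) :
    ∃ ε : ℕ, ε ≤ 1 ∧
      Tendsto (fun j => u (-((ε + 2*j : ℕ) : ℤ))) atTop atTop ∧
      Tendsto (fun j => u (-((ε + 2*j + 1 : ℕ) : ℤ))) atTop atBot ∧
      ∀ k : ℕ, Tendsto (fun j => u (-((ε + 2*(j+k) : ℕ):ℤ)) / u (-((ε + 2*j : ℕ):ℤ)))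
        atTop (nhds ((r₂⁻¹^2)^k)) := by
  have habs₁ : |r₁| = -r₁ := abs_of_neg (by linarith)
  have habs₂ : |r₂| = -r₂ := abs_of_neg (by linarith)
  have hr₂ne : r₂ ≠ 0 := by linarith
  set pr : ℝ[X] := (X - C r₁)^k₁ * Q with hpr
  have hprM : pr.Monic := Polynomial.Monic.mul ((Polynomial.monic_X_sub_C r₁).pow k₁) hQ
  have hLW : L pr (fun m => w₁ m + w₃ m) = 0 := by
    have h1 : L pr w₁ = 0 := by
      rw [hpr, mul_comm, L_mul, hw₁, L_seq_zero]
    have h2 : L pr w₃ = 0 := by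
      rw [hpr, L_mul, hw₃, L_seq_zero]
    have h3 := L_seq_add pr w₁ w₃
    rw [show (fun m => w₁ m + w₃ m) = w₁ + w₃ from rfl, h3, h1, h2, add_zero]
  have hrb : ∀ z ∈ (pr.map (algebraMap ℝ ℂ)).roots, |r₂| < ‖z‖ := by
    intro z hz
    rcases roots_pow_mul_mem r₁ k₁ Q hQ z hz with rfl | hz'
    · rw [Complex.norm_real, Real.norm_eq_abs]
      rw [habs₁, habs₂]; linarith
    · exact (hroots z hz').1
  obtain ⟨τ, hττ₀, hτb⟩ := exists_bound_below |r₂| (pr.map (algebraMap ℝ ℂ)).roots hrb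
  have hτ0 : 0 < τ := lt_of_le_of_lt (abs_nonneg r₂) hττ₀
  obtain ⟨Cc, hCc0, hCb⟩ := kernel_root_bound_bwd pr hprM _ hLW τ hτ0 hτb
  -- p_b and r
  set pb : ℝ[X] := B.comp (-X) with hpb
  have hpbne : pb ≠ 0 := by
    intro h
    apply hB
    have hBB : (B.comp (-X)).comp (-X) = B := by
      rw [Polynomial.comp_assoc]
      have : (-X : ℝ[X]).comp (-X) = X := by
        rw [Polynomial.neg_comp, Polynomial.X_comp, neg_neg]
      rw [this, Polynomial.comp_X]
    rw [← hBB, show B.comp (-X) = (0:ℝ[X]) from h, Polynomial.zero_comp]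
  have hrinv : r₂⁻¹ < -1 := by
    rw [show r₂⁻¹ = 1 / r₂ by rw [one_div], div_lt_iff_of_neg hr₂0]
    linarith
  have hσlt : τ⁻¹ < -r₂⁻¹ := by
    have h1 : -r₂⁻¹ = (-r₂)⁻¹ := by rw [inv_neg]
    rw [h1]
    apply inv_strictAnti₀ (by linarith) (by rw [habs₂] at hττ₀; exact hττ₀)
  have hσ0 : 0 < τ⁻¹ := by positivity
  have hmas := main_asymp (fun t : ℕ => u (-(t:ℤ))) (fun t : ℕ => w₁ (-(t:ℤ)) + w₃ (-(t:ℤ)))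
    pb hpbne r₂⁻¹ τ⁻¹ Cc hrinv hσ0 hσlt ?_ ?_
  · obtain ⟨ε, hε, h1, h2, h3⟩ := hmas
    exact ⟨ε, hε, h1, h2, h3⟩
  · intro t
    show u (-((t:ℕ):ℤ)) = pb.eval ((t:ℕ):ℝ) * (r₂⁻¹) ^ t + (w₁ (-((t:ℕ):ℤ)) + w₃ (-((t:ℕ):ℤ)))
    have h1 : u (-(t:ℤ)) = w₁ (-(t:ℤ)) + w₂ (-(t:ℤ)) + w₃ (-(t:ℤ)) := by rw [hu]; rfl
    rw [h1, hw₂v (-(t:ℤ))]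
    have h2 : B.eval ((-(t:ℤ) : ℤ):ℝ) = pb.eval (t:ℝ) := by
      rw [hpb, Polynomial.eval_comp]
      simp
    have h3 : r₂ ^ (-(t:ℤ)) = (r₂⁻¹) ^ t := by
      rw [zpow_neg, zpow_natCast, inv_pow]
    rw [h2, h3]
    ring
  · intro t
    show |w₁ (-((t:ℕ):ℤ)) + w₃ (-((t:ℕ):ℤ))| ≤ Cc * (τ⁻¹) ^ t
    exact hCb t

end Stmt12Aux


open Polynomial Stmt12Aux Filter in
set_option maxHeartbeats 2000000 in
theorem stmt12 (I : Set ℝ) (hI : I.OrdConnected) (n : ℕ) (hn : 0 < n)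
    (a : ℕ → ℝ) (ha0 : a 0 ≠ 0) (han : a n ≠ 0)
    (f : ℝ → ℝ) (hmap : Set.MapsTo f I I) (hcont : ContinuousOn f I)
    (hsurj : Set.SurjOn f I I)
    (r₁ r₂ : ℝ) (hr₁ : r₁ < -1) (hr₂ : -1 < r₂) (hr₂0 : r₂ < 0)
    (k₁ k₂ : ℕ) (hk₁ : 0 < k₁) (hk₂ : 0 < k₂)
    (Q : Polynomial ℝ) (hQ : Q.Monic)
    (hfact : (∑ i ∈ Finset.range (n + 1), C (a i) * X ^ i) =
      C (a n) * (X - C r₁) ^ k₁ * (X - C r₂) ^ k₂ * Q)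
    (hroots : ∀ z ∈ (Q.map (algebraMap ℝ ℂ)).roots,
      |r₂| < ‖z‖ ∧ ‖z‖ < |r₁|) :
    (∀ x ∈ I, ∑ k ∈ Finset.range (n + 1), a k * f^[k] x = 0) ↔
      ((∀ x ∈ I, ∑ k ∈ Finset.range (((X - C r₁) ^ k₁ * Q).natDegree + 1),
          ((X - C r₁) ^ k₁ * Q).coeff k * f^[k] x = 0) ∨
       (∀ x ∈ I, ∑ k ∈ Finset.range (((X - C r₂) ^ k₂ * Q).natDegree + 1),
          ((X - C r₂) ^ k₂ * Q).coeff k * f^[k] x = 0)) := by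
  classical
  set P : ℝ[X] := C (a n) * (X - C r₁) ^ k₁ * (X - C r₂) ^ k₂ * Q with hPdef
  set Rp₁ : ℝ[X] := (X - C r₁) ^ k₁ * Q with hR₁def
  set Rp₂ : ℝ[X] := (X - C r₂) ^ k₂ * Q with hR₂def
  have hPco : ∀ j, P.coeff j = if j < n+1 then a j else 0 := by
    intro j
    rw [← hfact]
    exact coeff_charsum a n j
  have hPdeg : P.natDegree ≤ n := by
    apply Polynomial.natDegree_le_iff_coeff_eq_zero.mpr
    intro N hN
    rw [hPco]
    simp only [if_neg (by omega : ¬ N < n + 1)]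
  have hQne : Q.map (algebraMap ℝ ℂ) ≠ 0 := (hQ.map _).ne_zero
  have hQr : ∀ r : ℝ, Q.eval r = 0 → |r₂| < |r| ∧ |r| < |r₁| := by
    intro r hr
    have h1 : ((r:ℝ):ℂ) ∈ (Q.map (algebraMap ℝ ℂ)).roots := by
      rw [Polynomial.mem_roots']
      refine ⟨hQne, ?_⟩
      have := Polynomial.IsRoot.map (f := algebraMap ℝ ℂ) hr
      simpa using this
    have := hroots _ h1
    rwa [Complex.norm_real, Real.norm_eq_abs] at this
  have hQ1 : Q.eval r₁ ≠ 0 := fun h => absurd (hQr r₁ h).2 (lt_irrefl _)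
  have hQ2 : Q.eval r₂ ≠ 0 := fun h => absurd (hQr r₂ h).1 (lt_irrefl _)
  have hr₁r₂ : r₁ ≠ r₂ := by intro h; rw [h] at hr₁; linarith
  have hco1 : IsCoprime ((X - C r₁)^k₁) ((X - C r₂)^k₂ * Q) :=
    IsCoprime.mul_right ((coprime_X_sub_C_X_sub_C hr₁r₂).pow)
      ((coprime_X_sub_C_of_eval_ne r₁ Q hQ1).pow_left)
  have hco2 : IsCoprime ((X - C r₂)^k₂) Q :=
    (coprime_X_sub_C_of_eval_ne r₂ Q hQ2).pow_left
  constructor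
  · -- forward direction
    intro Hfull
    have hinj := injOn_of_eq I f n a ha0 Hfull
    by_cases htriv : ∀ x ∈ I, ∀ y ∈ I, x = y
    · -- essentially a single point
      left
      intro x hx
      have hfx : f x = x := htriv _ (hmap hx) _ hx
      have hit : ∀ k : ℕ, f^[k] x = x := by
        intro k
        induction k with
        | zero => simp
        | succ k ih => rw [Function.iterate_succ_apply', ih, hfx]
      have h1 := Hfull x hx
      have h2 : (∑ k ∈ Finset.range (n+1), a k) * x = 0 := by
        rw [Finset.sum_mul, ← h1]
        apply Finset.sum_congr rfl
        intro k _
        rw [hit k]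
      have h3 : ∑ k ∈ Finset.range (n+1), a k = P.eval 1 := by
        rw [Polynomial.eval_eq_sum_range' (lt_of_le_of_lt hPdeg (lt_add_one n))]
        apply Finset.sum_congr rfl
        intro k hk
        rw [hPco k, if_pos (Finset.mem_range.mp hk), one_pow, mul_one]
      rcases eq_or_ne x 0 with rfl | hx0
      · apply Finset.sum_eq_zero
        intro k _
        rw [hit k, mul_zero]
      · have hP1 : P.eval 1 = 0 := by
          rw [h3] at h2
          exact (mul_eq_zero.mp h2).resolve_right hx0
        have hQe1 : Q.eval 1 = 0 := by
          rw [hPdef] at hP1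
          simp only [Polynomial.eval_mul, Polynomial.eval_pow, Polynomial.eval_sub,
            Polynomial.eval_X, Polynomial.eval_C, Polynomial.eval_one] at hP1
          have hf1 : (1 - r₁) ≠ 0 := by intro h; rw [sub_eq_zero] at h; linarith
          have hf2 : (1 - r₂) ≠ 0 := by intro h; rw [sub_eq_zero] at h; linarith
          have := mul_eq_zero.mp hP1
          rcases this with h | h
          · exfalso
            rcases mul_eq_zero.mp h with h' | h'
            · rcases mul_eq_zero.mp h' with h'' | h''
              · exact han h''
              · exact (pow_ne_zero k₁ hf1) h''
            · exact (pow_ne_zero k₂ hf2) h'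
          · exact h
        have h4 : ∑ k ∈ Finset.range (Rp₁.natDegree+1), Rp₁.coeff k * f^[k] x
            = Rp₁.eval 1 * x := by
          rw [Polynomial.eval_eq_sum_range' (lt_add_one _), Finset.sum_mul]
          apply Finset.sum_congr rfl
          intro k _
          rw [hit k, one_pow, mul_one]
        rw [h4, hR₁def]
        simp [Polynomial.eval_mul, hQe1]
    · push_neg at htriv
      obtain ⟨a₀, ha₀I, b₀, hb₀I, hab₀ne⟩ := htriv
      have hmonod : StrictMonoOn f I ∨ StrictAntiOn f I := by
        rcases lt_or_gt_of_ne hab₀ne with h | h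
        · exact mono_dichotomy hI hcont hinj ha₀I hb₀I h
        · exact mono_dichotomy hI hcont hinj hb₀I ha₀I h
      have hbij : Set.BijOn f I I := ⟨hmap, hinj, hsurj⟩
      have horb : ∀ x ∈ I, ∃ u : ℤ → ℝ,
          u 0 = x ∧ (∀ m, u m ∈ I) ∧ (∀ m, u (m+1) = f (u m)) :=
        fun x hx => exists_orbit hbij hx
      choose! u hu0 humem hustep using horb
      have hLP : ∀ x ∈ I, ∀ m : ℤ, L P (u x) m = 0 := by
        intro x hx m
        rw [L_apply_range P (lt_of_le_of_lt hPdeg (lt_add_one n)),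
          ← Hfull (u x m) (humem x hx m)]
        apply Finset.sum_congr rfl
        intro kk hkk
        rw [hPco kk, if_pos (Finset.mem_range.mp hkk)]
        congr 1
        exact orbit_iterate (hustep x hx) m kk
      have hLM : ∀ x ∈ I, L ((X - C r₁)^k₁ * ((X - C r₂)^k₂ * Q)) (u x) = 0 := by
        intro x hx
        have h1 : L P (u x) = 0 := funext (hLP x hx)
        have hPfac : P = C (a n) * ((X - C r₁)^k₁ * ((X - C r₂)^k₂ * Q)) := by
          rw [hPdef]; ring
        rw [hPfac, Stmt12Aux.L_mul] at h1
        funext m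
        have h2 := congrFun h1 m
        rw [L_C] at h2
        simp only [Pi.zero_apply] at h2 ⊢
        exact (mul_eq_zero.mp h2).resolve_left han
      have hdec : ∀ x ∈ I, ∃ A B : ℝ[X], ∃ w₁ w₂ w₃ : ℤ → ℝ,
          u x = w₁ + w₂ + w₃ ∧ (∀ m : ℤ, w₁ m = A.eval (m:ℝ) * r₁ ^ m) ∧
          (∀ m : ℤ, w₂ m = B.eval (m:ℝ) * r₂ ^ m) ∧
          L ((X - C r₁)^k₁) w₁ = 0 ∧ L ((X - C r₂)^k₂) w₂ = 0 ∧ L Q w₃ = 0 := by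
        intro x hx
        obtain ⟨w₁, wr, hsplit, hw₁, hwr⟩ := bezout_split _ _ hco1 (u x) (hLM x hx)
        obtain ⟨w₂, w₃, hsplit2, hw₂, hw₃⟩ := bezout_split _ _ hco2 wr hwr
        obtain ⟨A, hA⟩ := ker_pow (show r₁ ≠ 0 by linarith) k₁ w₁ hw₁
        obtain ⟨B, hB⟩ := ker_pow (show r₂ ≠ 0 by linarith) k₂ w₂ hw₂
        exact ⟨A, B, w₁, w₂, w₃, by rw [hsplit, hsplit2, add_assoc],
          hA, hB, hw₁, hw₂, hw₃⟩
      choose! Af Bf W1 W2 W3 hdecEq hw1v hw2v hLw1 hLw2 hLw3 using hdec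
      have hLRp₁ : ∀ x ∈ I, L Rp₁ (u x) = L Rp₁ (W2 x) := by
        intro x hx
        rw [hdecEq x hx, L_seq_add, L_seq_add]
        have e1 : L Rp₁ (W1 x) = 0 := by
          rw [hR₁def, mul_comm, Stmt12Aux.L_mul, hLw1 x hx, L_seq_zero]
        have e3 : L Rp₁ (W3 x) = 0 := by
          rw [hR₁def, Stmt12Aux.L_mul, hLw3 x hx, L_seq_zero]
        rw [e1, e3, zero_add, add_zero]
      have hLRp₂ : ∀ x ∈ I, L Rp₂ (u x) = L Rp₂ (W1 x) := by
        intro x hx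
        rw [hdecEq x hx, L_seq_add, L_seq_add]
        have e2 : L Rp₂ (W2 x) = 0 := by
          rw [hR₂def, mul_comm, Stmt12Aux.L_mul, hLw2 x hx, L_seq_zero]
        have e3 : L Rp₂ (W3 x) = 0 := by
          rw [hR₂def, Stmt12Aux.L_mul, hLw3 x hx, L_seq_zero]
        rw [e2, e3, add_zero, add_zero]
      have hsum₁ : ∀ x ∈ I, L Rp₁ (u x) 0 = 0 →
          ∑ k ∈ Finset.range (Rp₁.natDegree+1), Rp₁.coeff k * f^[k] x = 0 := by
        intro x hx h
        rw [← h, L_apply_range Rp₁ (lt_add_one _)]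
        apply Finset.sum_congr rfl
        intro k _
        congr 1
        rw [orbit_iterate (hustep x hx) 0 k, hu0 x hx]
      have hsum₂ : ∀ x ∈ I, L Rp₂ (u x) 0 = 0 →
          ∑ k ∈ Finset.range (Rp₂.natDegree+1), Rp₂.coeff k * f^[k] x = 0 := by
        intro x hx h
        rw [← h, L_apply_range Rp₂ (lt_add_one _)]
        apply Finset.sum_congr rfl
        intro k _
        congr 1
        rw [orbit_iterate (hustep x hx) 0 k, hu0 x hx]
      by_cases hall : ∀ x ∈ I, L Rp₁ (u x) = 0
      · left
        intro x hx
        exact hsum₁ x hx (congrFun (hall x hx) 0)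
      · push_neg at hall
        obtain ⟨x₀, hx₀I, hx₀ne⟩ := hall
        have hBx₀ : Bf x₀ ≠ 0 := by
          intro h
          apply hx₀ne
          rw [hLRp₁ x₀ hx₀I]
          have hW2z : W2 x₀ = 0 := by
            funext m
            rw [hw2v x₀ hx₀I m, h]
            simp
          rw [hW2z, L_seq_zero]
        obtain ⟨ε₂, hε₂, hS2top, hS2bot, hS2ratio⟩ :=
          backward_app (u x₀) r₁ r₂ hr₁ hr₂ hr₂0 k₁ Q hQ hroots (Bf x₀) hBx₀
            (W1 x₀) (W2 x₀) (W3 x₀) (hdecEq x₀ hx₀I) (hw2v x₀ hx₀I)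
            (hLw1 x₀ hx₀I) (hLw3 x₀ hx₀I)
        rcases hmonod with hmono | hanti
        · -- increasing: contradiction
          exfalso
          have hE1 : ∀ᶠ j : ℕ in atTop, 0 < u x₀ (-((ε₂ + 2*j : ℕ):ℤ)) :=
            hS2top.eventually_gt_atTop 0
          have hE2 : ∀ᶠ j : ℕ in atTop, u x₀ (-((ε₂ + 2*j + 1 : ℕ):ℤ)) < 0 :=
            hS2bot.eventually_lt_atBot 0
          have hE3 : ∀ᶠ j : ℕ in atTop, 0 < u x₀ (-((ε₂ + 2*(j+1) : ℕ):ℤ)) :=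
            (tendsto_add_atTop_nat 1).eventually hE1
          obtain ⟨j, hj1, hj2, hj3⟩ := (hE1.and (hE2.and hE3)).exists
          set m₁ : ℤ := -((ε₂ + 2*j + 2 : ℕ):ℤ) with hm₁
          have hidx1 : -((ε₂ + 2*(j+1) : ℕ):ℤ) = m₁ := by rw [hm₁]; omega
          have hidx2 : m₁ + 1 = -((ε₂ + 2*j + 1 : ℕ):ℤ) := by rw [hm₁]; omega
          have hidx3 : m₁ + 2 = -((ε₂ + 2*j : ℕ):ℤ) := by rw [hm₁]; omega
          have ha' : 0 < u x₀ m₁ := by rw [← hidx1]; exact hj3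
          have hb' : u x₀ (m₁ + 1) < 0 := by rw [hidx2]; exact hj2
          have hc' : 0 < u x₀ (m₁ + 2) := by rw [hidx3]; exact hj1
          have hfa : f (u x₀ m₁) = u x₀ (m₁ + 1) := (hustep x₀ hx₀I m₁).symm
          have hfb : f (u x₀ (m₁ + 1)) = u x₀ (m₁ + 2) := by
            have := hustep x₀ hx₀I (m₁ + 1)
            rw [show m₁ + 1 + 1 = m₁ + 2 by ring] at this
            exact this.symm
          have hle : u x₀ (m₁ + 1) ≤ u x₀ m₁ := by linarith
          have := hmono.monotoneOn (humem x₀ hx₀I (m₁ + 1)) (humem x₀ hx₀I m₁) hle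
          rw [hfa, hfb] at this
          linarith
        · -- decreasing: prove right disjunct
          right
          intro y hyI
          apply hsum₂ y hyI
          suffices hAy : Af y = 0 by
            have hW1z : W1 y = 0 := by
              funext m
              rw [hw1v y hyI m, hAy]
              simp
            rw [hLRp₂ y hyI, hW1z, L_seq_zero]
            rfl
          by_contra hAy
          obtain ⟨ε₁, hε₁, hS1top, hS1bot, hS1ratio⟩ :=
            forward_app (u y) r₁ r₂ hr₁ hr₂ hr₂0 k₂ Q hQ hroots (Af y) hAy
              (W1 y) (W2 y) (W3 y) (hdecEq y hyI) (hw1v y hyI)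
              (hLw2 y hyI) (hLw3 y hyI)
          -- choose k
          have hρ : (1:ℝ) < r₁^2 := by nlinarith
          obtain ⟨k0, hk0⟩ := pow_unbounded_of_one_lt (5:ℝ) hρ
          set k : ℕ := k0 + 1 with hkdef
          have hk5 : (5:ℝ) < (r₁^2)^k :=
            lt_of_lt_of_le hk0 (pow_le_pow_right₀ (by linarith) (by omega))
          set S1 : ℕ → ℝ := fun j => u y ((ε₁ + 2*j : ℕ):ℤ) with hS1def
          set S2 : ℕ → ℝ := fun i => u x₀ (-((ε₂ + 2*i : ℕ):ℤ)) with hS2def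
          have hE1 : ∀ᶠ j : ℕ in atTop, 0 < S1 j := hS1top.eventually_gt_atTop 0
          have hE2 : ∀ᶠ j : ℕ in atTop, 4 * S1 j ≤ S1 (j+k) := by
            have h4 := (hS1ratio k).eventually
              (eventually_gt_nhds (show (4:ℝ) < (r₁^2)^k by linarith))
            filter_upwards [h4, hE1] with j h1 h2
            rw [lt_div_iff₀ h2] at h1
            linarith
          have hE34 : ∀ᶠ i : ℕ in atTop, 0 < S2 i ∧ S2 i ≤ 2 * S2 (i + (k-1)) := by
            have hb1 : (1:ℝ) ≤ r₂⁻¹^2 := by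
              have : r₂⁻¹ < -1 := by
                rw [show r₂⁻¹ = 1 / r₂ by rw [one_div], div_lt_iff_of_neg hr₂0]
                linarith
              nlinarith
            have hge : (1:ℝ)/2 < (r₂⁻¹^2)^(k-1) :=
              lt_of_lt_of_le (by norm_num) (one_le_pow₀ hb1)
            filter_upwards [(hS2ratio (k-1)).eventually (eventually_gt_nhds hge),
              hS2top.eventually_gt_atTop 0] with i h1 h2
            refine ⟨h2, ?_⟩
            rw [lt_div_iff₀ h2] at h1
            linarith
          obtain ⟨M₂, hM₂⟩ := eventually_atTop.mp hE34
          set N₀ : ℕ := M₂ + k + 1 with hN₀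
          have hne : (Finset.range (N₀+1)).Nonempty := ⟨0, by simp⟩
          set BX : ℝ := (Finset.range (N₀+1)).sup' hne S2 with hBX
          obtain ⟨j, hj1, hj2, hj3⟩ :=
            (hE1.and (hE2.and (hS1top.eventually_gt_atTop BX))).exists
          have hex : ∃ i, S1 j < S2 i := (hS2top.eventually_gt_atTop (S1 j)).exists
          set i : ℕ := Nat.find hex with hidef
          have hi : S1 j < S2 i := Nat.find_spec hex
          have hmin : ∀ i' , i' < i → ¬ (S1 j < S2 i') := fun i' h => Nat.find_min hex h
          have hiN : N₀ < i := by
            by_contra h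
            push_neg at h
            have h5 : S2 i ≤ BX := Finset.le_sup' S2 (Finset.mem_range.mpr (by omega))
            linarith
          have hprev : S2 (i-1) ≤ S1 j := not_lt.mp (hmin (i-1) (by omega))
          have hik : S2 (i-k) ≤ 2 * S2 (i-1) := by
            have h6 := (hM₂ (i-k) (by omega)).2
            rw [show (i-k) + (k-1) = i-1 by omega] at h6
            exact h6
          have hf1 : f^[2*k] (S1 j) = S1 (j+k) := by
            have h7 := orbit_iterate (hustep y hyI) ((ε₁ + 2*j : ℕ):ℤ) (2*k)
            rw [hS1def]
            simp only []
            rw [← h7]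
            congr 1
            push_cast; ring
          have hf2 : f^[2*k] (S2 i) = S2 (i-k) := by
            have h8 := orbit_iterate (hustep x₀ hx₀I) (-((ε₂ + 2*i : ℕ):ℤ)) (2*k)
            rw [hS2def]
            simp only []
            rw [← h8]
            congr 1
            have : k ≤ i := by omega
            push_cast [this]
            ring
          have hmle := iterate_two_mono hanti hmap k (S1 j) (humem y hyI _)
            (S2 i) (humem x₀ hx₀I _) hi.le
          rw [hf1, hf2] at hmle
          linarith
  · -- reverse direction
    intro hred x hx
    have hsum : ∑ k ∈ Finset.range (n+1), a k * f^[k] x = L P (natext f x) 0 := by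
      rw [L_apply_range P (lt_of_le_of_lt hPdeg (lt_add_one n))]
      apply Finset.sum_congr rfl
      intro k hk
      rw [hPco k, if_pos (Finset.mem_range.mp hk)]
      congr 1
      show f^[k] x = natext f x (0 + k)
      unfold natext
      congr 1
      omega
    rw [hsum]
    rcases hred with h | h
    · have hfac : P = (C (a n) * (X - C r₂)^k₂) * Rp₁ := by
        rw [hPdef, hR₁def]; ring
      rw [hfac]
      exact full_from_reduced _ _ f I hmap x hx h
    · have hfac : P = (C (a n) * (X - C r₁)^k₁) * Rp₂ := by
        rw [hPdef, hR₂def]; ring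
      rw [hfac]
      exact full_from_reduced _ _ f I hmap x hx h
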